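/- Let A be a generic arrangement of n hyperplanes in K^k and let B(A) = {D_C : C ⊆ [n], |C| = k+1} be the discriminantal arrangement in K^n. For any intersection X of hyperplanes of B(A) with canonical presentation T(X) (the set of maximal index sets S with X ⊆ D_S and X ⊄ D_{S∪{i}} for i ∉ S), one has rank X ≤ ν(T(X)) := Σ_{S ∈ T(X)} (|S| − k). -/

import Mathlib

open scoped Classical

variable {K : Type*} [Field K] {ι : Type*} {k : ℕ}

/-- The subspace `D_S` of translation vectors `t` for which the translated
hyperplanes `{x | ⟨α i, x⟩ = t i}`, `i ∈ S`, have a common point. -/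
def DSub (α : ι → Fin k → K) (S : Set ι) : Submodule K (ι → K) where
  carrier := {t | ∃ x : Fin k → K, ∀ i ∈ S, ∑ j, α i j * x j = t i}
  zero_mem' := ⟨0, fun i _ => by simp⟩
  add_mem' := by
    rintro a b ⟨x, hx⟩ ⟨y, hy⟩
    exact ⟨x + y, fun i hi => by simp [mul_add, Finset.sum_add_distrib, hx i hi, hy i hi]⟩
  smul_mem' := by
    rintro c a ⟨x, hx⟩
    refine ⟨c • x, fun i hi => ?_⟩
    simp only [Pi.smul_apply, smul_eq_mul, ← hx i hi, Finset.mul_sum]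
    congr 1; ext j; ring

lemma DSub_anti (α : ι → Fin k → K) {S S' : Set ι} (h : S ⊆ S') :
    DSub α S' ≤ DSub α S := by
  rintro t ⟨x, hx⟩
  exact ⟨x, fun i hi => hx i (h hi)⟩

/-- If the rows of a generic arrangement indexed by a set of size `≥ k` all annihilate
`x` (as a dot product), then `x = 0`. -/
lemma aux_zero {n : ℕ} (α : Fin n → (Fin k → K))
    (hgen : ∀ S : Finset (Fin n), S.card ≤ k →
      LinearIndependent K (fun i : S => α i))
    (T : Finset (Fin n)) (hT : k ≤ T.card) (x : Fin k → K)
    (hx : ∀ i ∈ T, ∑ j, α i j * x j = 0) : x = 0 := by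
  rcases Nat.eq_zero_or_pos k with hk | hk
  · subst hk; funext j; exact j.elim0
  obtain ⟨S₀, hS₀T, hS₀⟩ := Finset.exists_subset_card_eq hT
  have hne : Nonempty ↥S₀ :=
    Finset.nonempty_coe_sort.mpr (Finset.card_pos.mp (by omega))
  have hli := hgen S₀ (le_of_eq hS₀)
  have hcard : Fintype.card ↥S₀ = Module.finrank K (Fin k → K) := by
    simp [Module.finrank_fintype_fun_eq_card, hS₀]
  have hspan := hli.span_eq_top_of_card_eq_finrank hcard
  let f : (Fin k → K) →ₗ[K] K :=
    { toFun := fun v => ∑ j, v j * x j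
      map_add' := fun a b => by simp [add_mul, Finset.sum_add_distrib]
      map_smul' := fun c a => by simp [Finset.mul_sum, mul_assoc]
      }
  have hle : Submodule.span K (Set.range fun i : ↥S₀ => α i) ≤ LinearMap.ker f := by
    rw [Submodule.span_le]
    rintro v ⟨i, rfl⟩
    exact hx i (hS₀T i.2)
  have hker : ∀ v, f v = 0 := by
    intro v
    have hv : v ∈ LinearMap.ker f := hle (hspan ▸ Submodule.mem_top)
    exact hv
  funext j
  have := hker (Pi.single j 1)
  simpa [Pi.single_apply, ite_mul, Finset.sum_ite_eq', f] using this
  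
/-- Codimension bound for a single `DSub`. -/
lemma codim_DSub_le {n : ℕ} (α : Fin n → (Fin k → K))
    (hgen : ∀ S : Finset (Fin n), S.card ≤ k →
      LinearIndependent K (fun i : S => α i))
    (S : Finset (Fin n)) (hS : k + 1 ≤ S.card) :
    n - Module.finrank K (DSub α (S : Set (Fin n))) ≤ S.card - k := by
  have hkS : k ≤ S.card := le_trans (Nat.le_succ k) hS
  -- the projection to coordinates in S
  let π : (Fin n → K) →ₗ[K] (↥S → K) := LinearMap.funLeft K K (fun i : ↥S => (i : Fin n))
  have hπsurj : Function.Surjective π :=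
    LinearMap.funLeft_surjective_of_injective K K _ Subtype.val_injective
  have hV : Module.finrank K ↥(LinearMap.ker π) = n - S.card := by
    have h1 := LinearMap.finrank_range_add_finrank_ker π
    rw [LinearMap.range_eq_top.mpr hπsurj, finrank_top,
      Module.finrank_fintype_fun_eq_card, Module.finrank_fintype_fun_eq_card] at h1
    simp only [Fintype.card_fin, Fintype.card_coe] at h1
    omega
  -- the linear map x ↦ (⟨α i, x⟩)_i
  let L : (Fin k → K) →ₗ[K] (Fin n → K) := Matrix.mulVecLin (Matrix.of α)
  have hLapp : ∀ (x : Fin k → K) (i : Fin n), L x i = ∑ j, α i j * x j := by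
    intro x i
    simp [L, Matrix.mulVecLin, Matrix.mulVec, dotProduct]
  have hLinj : Function.Injective L := by
    rw [injective_iff_map_eq_zero]
    intro x hx0
    refine aux_zero α hgen S hkS x fun i _ => ?_
    rw [← hLapp x i, hx0]; rfl
  have hW : Module.finrank K ↥(LinearMap.range L) = k := by
    rw [LinearMap.finrank_range_of_inj hLinj, Module.finrank_fintype_fun_eq_card,
      Fintype.card_fin]
  have hdisj : LinearMap.ker π ⊓ LinearMap.range L = ⊥ := by
    rw [eq_bot_iff]
    rintro t ⟨ht1, x, rfl⟩
    have hx0 : x = 0 := by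
      refine aux_zero α hgen S hkS x fun i hi => ?_
      rw [← hLapp x i]
      have : π (L x) = 0 := ht1
      exact congrFun this ⟨i, hi⟩
    simp [hx0]
  have hsub : LinearMap.ker π ⊔ LinearMap.range L ≤ DSub α (S : Set (Fin n)) := by
    refine sup_le ?_ ?_
    · intro t ht
      refine ⟨0, fun i hi => ?_⟩
      have : π t = 0 := ht
      have h0 : t i = 0 := congrFun this ⟨i, hi⟩
      simp [h0]
    · rintro t ⟨x, rfl⟩
      exact ⟨x, fun i _ => (hLapp x i).symm⟩
  have hsup : Module.finrank K ↥(LinearMap.ker π ⊔ LinearMap.range L) = (n - S.card) + k := by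
    have := Submodule.finrank_sup_add_finrank_inf_eq (LinearMap.ker π) (LinearMap.range L)
    rw [hdisj, hV, hW] at this
    simpa using this
  have hmono := Submodule.finrank_mono hsub
  rw [hsup] at hmono
  have hcardn : S.card ≤ n := by
    have := Finset.card_le_univ S
    simpa using this
  omega

/-- Codimension of a finite intersection is at most the sum of the codimensions. -/
lemma codim_finset_inf_le {V : Type*} [AddCommGroup V] [Module K V] [FiniteDimensional K V]
    {β : Type*} (F : Finset β) (f : β → Submodule K V) :
    Module.finrank K V - Module.finrank K ↥(F.inf f) ≤
      ∑ b ∈ F, (Module.finrank K V - Module.finrank K ↥(f b)) := by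
  classical
  induction F using Finset.induction_on with
  | empty => rw [Finset.inf_empty]; simp [finrank_top]
  | @insert a F ha ih =>
    rw [Finset.inf_insert, Finset.sum_insert ha]
    have h1 := Submodule.finrank_sup_add_finrank_inf_eq (f a) (F.inf f)
    have h2 : Module.finrank K ↥(f a ⊔ F.inf f) ≤ Module.finrank K V := Submodule.finrank_le _
    have h3 : Module.finrank K ↥(f a) ≤ Module.finrank K V := Submodule.finrank_le _
    have h4 : Module.finrank K ↥(F.inf f) ≤ Module.finrank K V := Submodule.finrank_le _
    omega

theorem rank_le_nu_canonical_presentation {K : Type*} [Field K] {n k : ℕ}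
    (α : Fin n → (Fin k → K))
    (hgen : ∀ S : Finset (Fin n), S.card ≤ k →
      LinearIndependent K (fun i : S => α i))
    (𝒞 : Finset (Finset (Fin n))) (h𝒞 : ∀ C ∈ 𝒞, C.card = k + 1) :
    n - Module.finrank K ↥(⨅ C ∈ 𝒞, DSub α (C : Set (Fin n))) ≤
      ∑ S : Finset (Fin n),
        if (k + 1 ≤ S.card ∧
            (⨅ C ∈ 𝒞, DSub α (C : Set (Fin n))) ≤ DSub α (S : Set (Fin n)) ∧
            ∀ i ∉ S, ¬ (⨅ C ∈ 𝒞, DSub α (C : Set (Fin n))) ≤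
              DSub α ((insert i S : Finset (Fin n)) : Set (Fin n)))
        then S.card - k else 0 := by
  set X := ⨅ C ∈ 𝒞, DSub α (C : Set (Fin n)) with hX
  set P : Finset (Fin n) → Prop := fun S =>
    (k + 1 ≤ S.card ∧ X ≤ DSub α (S : Set (Fin n)) ∧
      ∀ i ∉ S, ¬ X ≤ DSub α ((insert i S : Finset (Fin n)) : Set (Fin n))) with hP
  set T : Finset (Finset (Fin n)) := Finset.univ.filter P with hT
  -- every C ∈ 𝒞 extends to a maximal S ∈ T
  have hext : ∀ C ∈ 𝒞, ∃ S ∈ T, C ⊆ S := by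
    intro C hC
    set 𝒮 : Finset (Finset (Fin n)) :=
      Finset.univ.filter (fun S => C ⊆ S ∧ X ≤ DSub α (S : Set (Fin n))) with h𝒮
    have hCX : X ≤ DSub α (C : Set (Fin n)) := iInf₂_le C hC
    have hC𝒮 : C ∈ 𝒮 := by
      simp only [h𝒮, Finset.mem_filter, Finset.mem_univ, true_and]
      exact ⟨Finset.Subset.refl C, hCX⟩
    obtain ⟨S, hS𝒮, hSmax⟩ := Finset.exists_max_image 𝒮 Finset.card ⟨C, hC𝒮⟩
    simp only [h𝒮, Finset.mem_filter, Finset.mem_univ, true_and] at hS𝒮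
    obtain ⟨hCS, hXS⟩ := hS𝒮
    refine ⟨S, ?_, hCS⟩
    simp only [hT, Finset.mem_filter, Finset.mem_univ, true_and, hP]
    refine ⟨?_, hXS, ?_⟩
    · calc k + 1 = C.card := (h𝒞 C hC).symm
        _ ≤ S.card := Finset.card_le_card hCS
    · intro i hi hcon
      have hmem : insert i S ∈ 𝒮 := by
        simp only [h𝒮, Finset.mem_filter, Finset.mem_univ, true_and]
        exact ⟨hCS.trans (Finset.subset_insert i S), hcon⟩
      have := hSmax _ hmem
      rw [Finset.card_insert_of_notMem hi] at this
      omega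
  -- the inf over T is below X
  set Y : Submodule K (Fin n → K) := T.inf (fun S => DSub α (S : Set (Fin n))) with hY
  have hYX : Y ≤ X := by
    rw [hX]
    refine le_iInf₂ fun C hC => ?_
    obtain ⟨S, hST, hCS⟩ := hext C hC
    exact le_trans (Finset.inf_le hST) (DSub_anti α (by exact_mod_cast hCS))
  have hstep1 : n - Module.finrank K ↥X ≤ n - Module.finrank K ↥Y :=
    Nat.sub_le_sub_left (Submodule.finrank_mono hYX) n
  have hn : Module.finrank K (Fin n → K) = n := by
    rw [Module.finrank_fintype_fun_eq_card, Fintype.card_fin]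
  have hstep2 : n - Module.finrank K ↥Y ≤
      ∑ S ∈ T, (n - Module.finrank K ↥(DSub α (S : Set (Fin n)))) := by
    have := codim_finset_inf_le T (fun S => DSub α (S : Set (Fin n)))
    rwa [hn] at this
  have hstep3 : ∑ S ∈ T, (n - Module.finrank K ↥(DSub α (S : Set (Fin n)))) ≤
      ∑ S ∈ T, (S.card - k) := by
    refine Finset.sum_le_sum fun S hS => ?_
    simp only [hT, Finset.mem_filter, Finset.mem_univ, true_and, hP] at hS
    exact codim_DSub_le α hgen S hS.1
  have hsum : ∑ S ∈ T, (S.card - k) =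
      ∑ S : Finset (Fin n), if P S then S.card - k else 0 := by
    rw [hT, Finset.sum_filter]
  calc n - Module.finrank K ↥X ≤ n - Module.finrank K ↥Y := hstep1
    _ ≤ _ := hstep2
    _ ≤ _ := hstep3
    _ = _ := hsum
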